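/- Weak Cartesian prime factorizations are unique up to indexing and isomorphism of factors: let G be a connected digraph with loops with at least one unlooped vertex, let (G_ι)_{ι∈I} and (H_κ)_{κ∈K} be families of prime digraphs, and let a ∈ ∏_{ι∈I} G_ι and b ∈ ∏_{κ∈K} H_κ be vertices such that G ≅ ∏^a_{ι∈I} G_ι and G ≅ ∏^b_{κ∈K} H_κ. Then there is a bijection σ : I → K such that G_ι ≅ H_{σ(ι)} for every ι ∈ I. -/

import Mathlib

universe u

namespace Digraph

/-- Cartesian product of two digraphs. -/
def boxProd {α β : Type*} (G : Digraph α) (H : Digraph β) : Digraph (α × β) where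
  Adj p q := (G.Adj p.1 q.1 ∧ p.2 = q.2) ∨ (p.1 = q.1 ∧ H.Adj p.2 q.2)

/-- Cartesian product of a family of digraphs. -/
def prodFam {I : Type*} {V : I → Type*} (G : ∀ i, Digraph (V i)) : Digraph (∀ i, V i) where
  Adj u v := ∃ κ, (G κ).Adj (u κ) (v κ) ∧ ∀ i, i ≠ κ → u i = v i

/-- The shadow of a digraph: distinct vertices are adjacent iff there is an arc between them
in some direction. -/
def shadow {α : Type*} (G : Digraph α) : SimpleGraph α where
  Adj a b := a ≠ b ∧ (G.Adj a b ∨ G.Adj b a)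
  symm := by
    constructor
    rintro a b ⟨hab, h⟩
    exact ⟨hab.symm, h.symm⟩
  loopless := by
    constructor
    rintro a ⟨ha, -⟩
    exact ha rfl

/-- A digraph is connected if its shadow is connected. -/
def Connected {α : Type*} (G : Digraph α) : Prop := G.shadow.Connected

/-- Isomorphisms of digraphs. -/
abbrev Iso {α β : Type*} (G : Digraph α) (H : Digraph β) := RelIso G.Adj H.Adj

/-- A digraph is prime w.r.t. the Cartesian product if it is nontrivial, connected, has an
unlooped vertex, and in every representation as a product of two digraphs one factor
has exactly one vertex. -/
def IsPrime {α : Type u} (G : Digraph α) : Prop :=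
  G.Connected ∧ Nontrivial α ∧ (∃ v, ¬ G.Adj v v) ∧
    ∀ {A B : Type u} (GA : Digraph A) (GB : Digraph B),
      Nonempty (G.Iso (GA.boxProd GB)) →
        (Nonempty A ∧ Subsingleton A) ∨ (Nonempty B ∧ Subsingleton B)

/-- The vertex set of the connected component of `a` in the shadow of the product. -/
def weakComponent {I : Type*} {V : I → Type*} (G : ∀ i, Digraph (V i)) (a : ∀ i, V i) :
    Set (∀ i, V i) :=
  {v | (prodFam G).shadow.Reachable a v}

/-- The weak Cartesian product: the induced subdigraph of the Cartesian product on the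
connected component (in the shadow) of the vertex `a`. -/
def weakProd {I : Type*} {V : I → Type*} (G : ∀ i, Digraph (V i)) (a : ∀ i, V i) :
    Digraph (weakComponent G a) where
  Adj u v := (prodFam G).Adj u.1 v.1

end Digraph

namespace DigraphUPF

open Digraph Function

set_option linter.unusedSectionVars false

variable {I : Type u} {W : I → Type u}

section OneFam

variable [DecidableEq I] (Gs : ∀ i, Digraph (W i)) (a : ∀ i, W i)

lemma shadow_prodFam_adj {u v : ∀ i, W i} :
    (prodFam Gs).shadow.Adj u v ↔
      ∃ i, (Gs i).shadow.Adj (u i) (v i) ∧ ∀ j, j ≠ i → u j = v j := by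
  constructor
  · rintro ⟨hne, harc | harc⟩
    · obtain ⟨i, hi, he⟩ := harc
      refine ⟨i, ⟨?_, Or.inl hi⟩, he⟩
      intro h
      apply hne
      funext j
      by_cases hj : j = i
      · subst hj; exact h
      · exact he j hj
    · obtain ⟨i, hi, he⟩ := harc
      refine ⟨i, ⟨?_, Or.inr hi⟩, fun j hj => (he j hj).symm⟩
      intro h
      apply hne
      funext j
      by_cases hj : j = i
      · subst hj; exact h
      · exact (he j hj).symm
  · rintro ⟨i, ⟨hne, hi | hi⟩, he⟩
    · exact ⟨fun h => hne (congrFun h i), Or.inl ⟨i, hi, he⟩⟩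
    · exact ⟨fun h => hne (congrFun h i), Or.inr ⟨i, hi, fun j hj => (he j hj).symm⟩⟩

lemma color_eq {u v : ∀ i, W i} {κ : I}
    (hadj : (prodFam Gs).shadow.Adj u v) (h : ∀ l, l ≠ κ → u l = v l) :
    (Gs κ).shadow.Adj (u κ) (v κ) ∧ ∀ j, j ≠ κ → u j = v j := by
  obtain ⟨i, hi, he⟩ := (shadow_prodFam_adj Gs).1 hadj
  by_cases hik : i = κ
  · subst hik; exact ⟨hi, he⟩
  · exact absurd (h i hik) hi.1

lemma shadowAdj_update {z : ∀ i, W i} {i : I} {w : W i}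
    (h : (Gs i).shadow.Adj (z i) w) :
    (prodFam Gs).shadow.Adj z (Function.update z i w) := by
  refine (shadow_prodFam_adj Gs).2 ⟨i, ?_, fun j hj => (Function.update_of_ne hj _ _).symm⟩
  rwa [Function.update_self]

lemma update_mem_of_walk {i : I} :
    ∀ {c d : W i}, ((Gs i).shadow.Walk c d) → ∀ z : ∀ j, W j,
      z ∈ weakComponent Gs a → z i = c → Function.update z i d ∈ weakComponent Gs a := by
  intro c d p
  induction p with
  | nil =>
    intro z hz hzc
    rwa [← hzc, Function.update_eq_self]
  | cons h p ih =>
    rename_i c c' d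
    intro z hz hzc
    have hadj : (prodFam Gs).shadow.Adj z (Function.update z i c') :=
      shadowAdj_update Gs (by rwa [hzc])
    have hmem : Function.update z i c' ∈ weakComponent Gs a :=
      SimpleGraph.Reachable.trans hz hadj.reachable
    have := ih (Function.update z i c') hmem (Function.update_self _ _ _)
    rwa [Function.update_idem] at this

lemma update_mem {z : ∀ j, W j} (hz : z ∈ weakComponent Gs a) {i : I}
    (hc : (Gs i).Connected) (w : W i) : Function.update z i w ∈ weakComponent Gs a := by
  obtain ⟨p⟩ := hc.preconnected (z i) w
  exact update_mem_of_walk Gs a p z hz rfl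

lemma unlooped_coord {x : ∀ i, W i} (hx : ¬ (prodFam Gs).Adj x x) (i : I) :
    ¬ (Gs i).Adj (x i) (x i) :=
  fun h => hx ⟨i, h, fun _ _ => rfl⟩

lemma layer_adj {x : ∀ i, W i} (hx : ¬ (prodFam Gs).Adj x x) (i : I) (w w' : W i) :
    (prodFam Gs).Adj (Function.update x i w) (Function.update x i w') ↔ (Gs i).Adj w w' := by
  constructor
  · rintro ⟨j, hj, he⟩
    by_cases hji : j = i
    · subst hji; rwa [Function.update_self, Function.update_self] at hj
    · rw [Function.update_of_ne hji, Function.update_of_ne hji] at hj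
      exact absurd hj (unlooped_coord Gs hx j)
  · intro h
    refine ⟨i, ?_, fun j hj => by rw [Function.update_of_ne hj, Function.update_of_ne hj]⟩
    rwa [Function.update_self, Function.update_self]

lemma box_adj {x : ∀ i, W i} (hx : ¬ (prodFam Gs).Adj x x) (i : I) (z z' : ∀ j, W j) :
    (prodFam Gs).Adj z z' ↔
      ((Gs i).Adj (z i) (z' i) ∧ Function.update z i (x i) = Function.update z' i (x i)) ∨
      (z i = z' i ∧ (prodFam Gs).Adj (Function.update z i (x i)) (Function.update z' i (x i))) := by
  constructor
  · rintro ⟨j, hj, he⟩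
    by_cases hji : j = i
    · refine Or.inl ⟨by rw [← hji]; exact hj, funext fun l => ?_⟩
      by_cases hl : l = i
      · subst hl; rw [Function.update_self, Function.update_self]
      · rw [Function.update_of_ne hl, Function.update_of_ne hl]
        exact he l (by rw [hji]; exact hl)
    · refine Or.inr ⟨he i (fun h => hji h.symm), ⟨j, ?_, fun l hl => ?_⟩⟩
      · rwa [Function.update_of_ne hji, Function.update_of_ne hji]
      · by_cases hli : l = i
        · subst hli; rw [Function.update_self, Function.update_self]
        · rw [Function.update_of_ne hli, Function.update_of_ne hli]; exact he l hl
  · rintro (⟨hadj, hupd⟩ | ⟨hzi, j, hj, he⟩)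
    · refine ⟨i, hadj, fun l hl => ?_⟩
      have := congrFun hupd l
      rwa [Function.update_of_ne hl, Function.update_of_ne hl] at this
    · by_cases hji : j = i
      · subst hji
        rw [Function.update_self, Function.update_self] at hj
        exact absurd hj (unlooped_coord Gs hx j)
      · rw [Function.update_of_ne hji, Function.update_of_ne hji] at hj
        refine ⟨j, hj, fun l hl => ?_⟩
        by_cases hli : l = i
        · subst hli; exact hzi
        · have := he l hl
          rwa [Function.update_of_ne hli, Function.update_of_ne hli] at this

lemma square {S T S' T' : ∀ i, W i} {l1 l2 : I}
    (hTS' : T ≠ S') (hT'S : T' ≠ S)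
    (eST : ∀ j, j ≠ l1 → S j = T j) (nST : S l1 ≠ T l1)
    (eSS' : ∀ j, j ≠ l2 → S j = S' j) (nSS' : S l2 ≠ S' l2)
    (hTT' : (prodFam Gs).shadow.Adj T T') (hS'T' : (prodFam Gs).shadow.Adj S' T') :
    ∀ j, j ≠ l1 → S' j = T' j := by
  obtain ⟨mu, hmuadj, eTT'⟩ := (shadow_prodFam_adj Gs).1 hTT'
  obtain ⟨nu, hnuadj, eS'T'⟩ := (shadow_prodFam_adj Gs).1 hS'T'
  have nTT' : T mu ≠ T' mu := hmuadj.1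
  have nS'T' : S' nu ≠ T' nu := hnuadj.1
  by_cases hl : l1 = l2
  · subst hl
    have hmu1 : mu = l1 := by
      by_contra hmu1
      have h1 : S' mu ≠ T' mu := by
        rw [← eSS' mu hmu1, eST mu hmu1]; exact nTT'
      have hnumu : nu = mu := by
        by_contra hnumu
        exact h1 (eS'T' mu (fun h => hnumu h.symm))
      have hTl : T l1 ≠ S' l1 := by
        intro he
        apply hTS'
        funext j
        by_cases hj : j = l1
        · subst hj; exact he
        · exact (eST j hj).symm.trans (eSS' j hj)
      have h2 : S' l1 ≠ T' l1 := by
        rw [← eTT' l1 (fun h => hmu1 h.symm)]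
        exact fun h => hTl h.symm
      have hnu1 : nu = l1 := by
        by_contra hnu1
        exact h2 (eS'T' l1 (fun h => hnu1 h.symm))
      rw [hnu1] at hnumu
      exact hmu1 hnumu.symm
    intro j hj
    rw [← eSS' j hj, eST j hj, eTT' j (by rw [hmu1]; exact hj)]
  · have hS'l1 : S' l1 = S l1 := (eSS' l1 hl).symm
    have hT'ne : S' l1 ≠ T' l1 := by
      by_cases hmu1 : mu = l1
      · exfalso
        subst hmu1
        have hnul2 : nu = l2 := by
          have h3 : S' l2 ≠ T' l2 := by
            rw [← eTT' l2 (fun h => hl h.symm), ← eST l2 (fun h => hl h.symm)]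
            exact fun h => nSS' h.symm
          by_contra hnu2
          exact h3 (eS'T' l2 (fun h => hnu2 h.symm))
        have hT'l1 : T' mu = S mu := by
          rw [← eS'T' mu (by rw [hnul2]; exact hl), hS'l1]
        apply hT'S
        funext j
        by_cases hj : j = mu
        · subst hj; exact hT'l1
        · rw [← eTT' j hj, ← eST j hj]
      · rw [hS'l1, ← eTT' l1 (fun h => hmu1 h.symm)]
        exact nST
    have hnu1 : nu = l1 := by
      by_contra hnu1
      exact hT'ne (eS'T' l1 (fun h => hnu1 h.symm))
    rw [← hnu1]
    exact eS'T'

end OneFam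

section TwoFam

variable {K : Type u} {X : K → Type u}
variable [DecidableEq I] [DecidableEq K]
variable {Gs : ∀ i, Digraph (W i)} {a : ∀ i, W i} {Hs : ∀ κ, Digraph (X κ)} {b : ∀ κ, X κ}

/-- membership in the layer through `x₀` in direction `κ`, w.r.t. the `ψ`-side factorization -/
def InLayer (ψ : (weakProd Gs a).Iso (weakProd Hs b)) (x₀ : ↥(weakComponent Gs a)) (κ : K)
    (z : ↥(weakComponent Gs a)) : Prop :=
  ∀ lam, lam ≠ κ → (ψ z).1 lam = (ψ x₀).1 lam

variable (ψ : (weakProd Gs a).Iso (weakProd Hs b))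

lemma transfer {z z' : ↥(weakComponent Gs a)} :
    (prodFam Gs).shadow.Adj z.1 z'.1 ↔ (prodFam Hs).shadow.Adj (ψ z).1 (ψ z').1 := by
  have harc : (prodFam Gs).Adj z.1 z'.1 ↔ (prodFam Hs).Adj (ψ z).1 (ψ z').1 :=
    (ψ.map_rel_iff (a := z) (b := z')).symm
  have harc' : (prodFam Gs).Adj z'.1 z.1 ↔ (prodFam Hs).Adj (ψ z').1 (ψ z).1 :=
    (ψ.map_rel_iff (a := z') (b := z)).symm
  have hne : z.1 ≠ z'.1 ↔ (ψ z).1 ≠ (ψ z').1 := by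
    constructor
    · intro h he
      exact h (congrArg Subtype.val (ψ.injective (Subtype.ext he)))
    · intro h he
      exact h (congrArg Subtype.val (congrArg ψ (Subtype.ext he)))
  exact and_congr hne (or_congr harc harc')

lemma sub_ne {z z' : ↥(weakComponent Gs a)} (h : z.1 ≠ z'.1) : (ψ z).1 ≠ (ψ z').1 :=
  fun he => h (congrArg Subtype.val (ψ.injective (Subtype.ext he)))

variable (x₀ : ↥(weakComponent Gs a)) (κ : K)

lemma ladder {i j : I} :
    ∀ {c d : W i}, ((Gs i).shadow.Walk c d) → ∀ (v v' : ↥(weakComponent Gs a)),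
      v.1 i = c → v'.1 i = c →
      j ≠ i → (Gs j).shadow.Adj (v.1 j) (v'.1 j) →
      (∀ l, l ≠ j → v.1 l = v'.1 l) →
      (∀ lam, lam ≠ κ → (ψ v).1 lam = (ψ v').1 lam) →
      ∀ (zd zd' : ↥(weakComponent Gs a)), zd.1 = Function.update v.1 i d →
        zd'.1 = Function.update v'.1 i d →
        ∀ lam, lam ≠ κ → (ψ zd).1 lam = (ψ zd').1 lam := by
  intro c d p
  induction p with
  | nil =>
    intro v v' hvc hv'c hij hadjj hcol hq zd zd' hzd hzd'
    have h1 : zd = v := Subtype.ext (by rw [hzd, ← hvc, Function.update_eq_self])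
    have h2 : zd' = v' := Subtype.ext (by rw [hzd', ← hv'c, Function.update_eq_self])
    rw [h1, h2]
    exact hq
  | cons h p ih =>
    rename_i c c1 d
    intro v v' hvc hv'c hij hadjj hcol hq zd zd' hzd hzd'
    have hadjvc : (Gs i).shadow.Adj (v.1 i) c1 := by rw [hvc]; exact h
    have hadjv'c : (Gs i).shadow.Adj (v'.1 i) c1 := by rw [hv'c]; exact h
    have hm1 : Function.update v.1 i c1 ∈ weakComponent Gs a :=
      v.2.trans (shadowAdj_update Gs hadjvc).reachable
    have hm2 : Function.update v'.1 i c1 ∈ weakComponent Gs a :=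
      v'.2.trans (shadowAdj_update Gs hadjv'c).reachable
    set v1 : ↥(weakComponent Gs a) := ⟨Function.update v.1 i c1, hm1⟩ with hv1
    set v1' : ↥(weakComponent Gs a) := ⟨Function.update v'.1 i c1, hm2⟩ with hv1'
    -- G-side shadow adjacencies
    have hvv1 : (prodFam Gs).shadow.Adj v.1 v1.1 := shadowAdj_update Gs hadjvc
    have hv'v1' : (prodFam Gs).shadow.Adj v'.1 v1'.1 := shadowAdj_update Gs hadjv'c
    have hvv' : (prodFam Gs).shadow.Adj v.1 v'.1 :=
      (shadow_prodFam_adj Gs).2 ⟨j, hadjj, hcol⟩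
    have hv1v1' : (prodFam Gs).shadow.Adj v1.1 v1'.1 := by
      refine (shadow_prodFam_adj Gs).2 ⟨j, ?_, fun l hl => ?_⟩
      · show (Gs j).shadow.Adj (Function.update v.1 i c1 j) (Function.update v'.1 i c1 j)
        rwa [Function.update_of_ne hij, Function.update_of_ne hij]
      · show Function.update v.1 i c1 l = Function.update v'.1 i c1 l
        by_cases hli : l = i
        · subst hli; rw [Function.update_self, Function.update_self]
        · rw [Function.update_of_ne hli, Function.update_of_ne hli]; exact hcol l hl
    -- transfer to the H side
    have hST := (transfer ψ).1 hvv'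
    have hSS' := (transfer ψ).1 hvv1
    have hTT' := (transfer ψ).1 hv'v1'
    have hS'T' := (transfer ψ).1 hv1v1'
    have hceq := color_eq Hs hST hq
    have nST : (ψ v).1 κ ≠ (ψ v').1 κ := hceq.1.1
    obtain ⟨l2, hl2, eSS'⟩ := (shadow_prodFam_adj Hs).1 hSS'
    have nSS' : (ψ v).1 l2 ≠ (ψ v1).1 l2 := hl2.1
    have hTS' : (ψ v').1 ≠ (ψ v1).1 := by
      apply sub_ne
      intro he
      have := congrFun he j
      rw [hv1] at this
      simp only [Function.update_of_ne hij] at this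
      exact hadjj.1 this.symm
    have hT'S : (ψ v1').1 ≠ (ψ v).1 := by
      apply sub_ne
      intro he
      have := congrFun he j
      rw [hv1'] at this
      simp only [Function.update_of_ne hij] at this
      exact hadjj.1 this.symm
    have hsq := square Hs hTS' hT'S hq nST eSS' nSS' hTT' hS'T'
    -- hsq : ∀ lam ≠ κ, (ψ v1).1 lam = (ψ v1').1 lam
    refine ih v1 v1' (Function.update_self _ _ _) (Function.update_self _ _ _) hij ?_ ?_ hsq
      zd zd' ?_ ?_
    · show (Gs j).shadow.Adj (Function.update v.1 i c1 j) (Function.update v'.1 i c1 j)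
      rwa [Function.update_of_ne hij, Function.update_of_ne hij]
    · intro l hl
      show Function.update v.1 i c1 l = Function.update v'.1 i c1 l
      by_cases hli : l = i
      · subst hli; rw [Function.update_self, Function.update_self]
      · rw [Function.update_of_ne hli, Function.update_of_ne hli]; exact hcol l hl
    · show zd.1 = Function.update (Function.update v.1 i c1) i d
      rw [Function.update_idem]; exact hzd
    · show zd'.1 = Function.update (Function.update v'.1 i c1) i d
      rw [Function.update_idem]; exact hzd'

lemma lift_walk (hIx : InLayer ψ x₀ κ x₀) :
    ∀ {c d : X κ}, ((Hs κ).shadow.Walk c d) → ∀ (s : ↥(weakComponent Gs a)),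
      InLayer ψ x₀ κ s → (ψ s).1 κ = c →
      ∃ t : ↥(weakComponent Gs a),
        Relation.ReflTransGen
          (fun s t => (prodFam Gs).shadow.Adj s.1 t.1 ∧ InLayer ψ x₀ κ t) s t ∧
        InLayer ψ x₀ κ t ∧ (ψ t).1 κ = d := by
  intro c d p
  induction p with
  | nil =>
    intro s hs hsc
    exact ⟨s, Relation.ReflTransGen.refl, hs, hsc⟩
  | cons h p ih =>
    rename_i c c1 d
    intro s hs hsc
    have hadj : (Hs κ).shadow.Adj ((ψ s).1 κ) c1 := by rw [hsc]; exact h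
    have hmem : Function.update (ψ s).1 κ c1 ∈ weakComponent Hs b :=
      (ψ s).2.trans (shadowAdj_update Hs hadj).reachable
    set t1 : ↥(weakComponent Gs a) := ψ.symm ⟨Function.update (ψ s).1 κ c1, hmem⟩ with ht1
    have hpsit1 : (ψ t1).1 = Function.update (ψ s).1 κ c1 := by
      rw [ht1, RelIso.apply_symm_apply]
    have hadjst1 : (prodFam Gs).shadow.Adj s.1 t1.1 := by
      rw [transfer ψ, hpsit1]
      exact shadowAdj_update Hs hadj
    have hIt1 : InLayer ψ x₀ κ t1 := by
      intro lam hlam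
      rw [hpsit1, Function.update_of_ne hlam]
      exact hs lam hlam
    have ht1κ : (ψ t1).1 κ = c1 := by rw [hpsit1, Function.update_self]
    obtain ⟨t, hrt, hIt, htd⟩ := ih t1 hIt1 ht1κ
    exact ⟨t, Relation.ReflTransGen.head ⟨hadjst1, hIt1⟩ hrt, hIt, htd⟩

lemma reach_in_layer (hHconnκ : (Hs κ).Connected)
    (u v : ↥(weakComponent Gs a)) (hu : InLayer ψ x₀ κ u) (hv : InLayer ψ x₀ κ v) :
    Relation.ReflTransGen
      (fun s t => (prodFam Gs).shadow.Adj s.1 t.1 ∧ InLayer ψ x₀ κ t) u v := by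
  obtain ⟨p⟩ := hHconnκ.preconnected ((ψ u).1 κ) ((ψ v).1 κ)
  obtain ⟨t, hrt, hIt, htκ⟩ := lift_walk ψ x₀ κ (fun _ _ => rfl) p u hu rfl
  have : t = v := by
    apply ψ.injective
    apply Subtype.ext
    funext lam
    by_cases hlam : lam = κ
    · subst hlam; exact htκ
    · exact (hIt lam hlam).trans (hv lam hlam).symm
  rwa [this] at hrt

lemma mix (hGconn : ∀ i', (Gs i').Connected) (hHconnκ : (Hs κ).Connected)
    (u v : ↥(weakComponent Gs a)) (hu : InLayer ψ x₀ κ u) (hv : InLayer ψ x₀ κ v) (i : I)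
    (z : ↥(weakComponent Gs a)) (hz : z.1 = Function.update v.1 i (u.1 i)) :
    InLayer ψ x₀ κ z := by
  have hRT := reach_in_layer ψ x₀ κ hHconnκ u v hu hv
  have key : ∀ (w : ↥(weakComponent Gs a)),
      Relation.ReflTransGen
        (fun s t => (prodFam Gs).shadow.Adj s.1 t.1 ∧ InLayer ψ x₀ κ t) u w →
      InLayer ψ x₀ κ w ∧
        ∀ z' : ↥(weakComponent Gs a), z'.1 = Function.update w.1 i (u.1 i) →
          InLayer ψ x₀ κ z' := by
    intro w hw
    induction hw with
    | refl =>
      refine ⟨hu, fun z' hz' => ?_⟩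
      have : z' = u := Subtype.ext (by rw [hz', Function.update_eq_self])
      rw [this]; exact hu
    | tail hab hbc ih =>
      rename_i bb cc
      obtain ⟨hIb, hreps⟩ := ih
      obtain ⟨hadjbc, hIc⟩ := hbc
      refine ⟨hIc, fun z' hz' => ?_⟩
      obtain ⟨j, hjadj, hje⟩ := (shadow_prodFam_adj Gs).1 hadjbc
      by_cases hji : j = i
      · subst hji
        apply hreps z'
        rw [hz']
        funext l
        by_cases hl : l = j
        · subst hl; rw [Function.update_self, Function.update_self]
        · rw [Function.update_of_ne hl, Function.update_of_ne hl]
          exact (hje l hl).symm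
      · have hmmem : Function.update bb.1 i (u.1 i) ∈ weakComponent Gs a :=
          update_mem Gs a bb.2 (hGconn i) (u.1 i)
        have hIm : InLayer ψ x₀ κ (⟨Function.update bb.1 i (u.1 i), hmmem⟩ :
            ↥(weakComponent Gs a)) := hreps _ rfl
        obtain ⟨p⟩ := (hGconn i).preconnected (bb.1 i) (u.1 i)
        have hv'c : cc.1 i = bb.1 i := (hje i (fun h => hji h.symm)).symm
        have hq : ∀ lam, lam ≠ κ → (ψ bb).1 lam = (ψ cc).1 lam :=
          fun lam hl => (hIb lam hl).trans (hIc lam hl).symm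
        have hlad := ladder ψ κ p bb cc rfl hv'c hji hjadj hje hq
          ⟨Function.update bb.1 i (u.1 i), hmmem⟩ z' rfl (by rw [hz'])
        intro lam hl
        exact ((hlad lam hl).symm).trans (hIm lam hl)
  exact (key v hRT).2 z hz

end TwoFam

section Conc

variable {K : Type u} {X : K → Type u}
variable [DecidableEq I] [DecidableEq K]
variable {Gs : ∀ i, Digraph (W i)} {a : ∀ i, W i} {Hs : ∀ κ, Digraph (X κ)} {b : ∀ κ, X κ}
variable (ψ : (weakProd Gs a).Iso (weakProd Hs b)) (x₀ : ↥(weakComponent Gs a)) (κ : K)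

/-- lift of a vertex of `X κ` into the `κ`-layer through `x₀`. -/
def ell (hHconnκ : (Hs κ).Connected) (w : X κ) : ↥(weakComponent Gs a) :=
  ψ.symm ⟨Function.update (ψ x₀).1 κ w, update_mem Hs b (ψ x₀).2 hHconnκ w⟩

lemma ell_spec (hHconnκ : (Hs κ).Connected) (w : X κ) :
    (ψ (ell ψ x₀ κ hHconnκ w)).1 = Function.update (ψ x₀).1 κ w := by
  rw [ell, RelIso.apply_symm_apply]

lemma ell_inLayer (hHconnκ : (Hs κ).Connected) (w : X κ) :
    InLayer ψ x₀ κ (ell ψ x₀ κ hHconnκ w) := by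
  intro lam hlam
  rw [ell_spec, Function.update_of_ne hlam]

lemma ell_coord (hHconnκ : (Hs κ).Connected) (w : X κ) :
    (ψ (ell ψ x₀ κ hHconnκ w)).1 κ = w := by
  rw [ell_spec, Function.update_self]

lemma ell_eq (hHconnκ : (Hs κ).Connected) (z : ↥(weakComponent Gs a))
    (hz : InLayer ψ x₀ κ z) : ell ψ x₀ κ hHconnκ ((ψ z).1 κ) = z := by
  apply ψ.injective
  rw [ell, RelIso.apply_symm_apply]
  apply Subtype.ext
  funext lam
  show Function.update (ψ x₀).1 κ ((ψ z).1 κ) lam = (ψ z).1 lam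
  by_cases hlam : lam = κ
  · subst hlam; rw [Function.update_self]
  · rw [Function.update_of_ne hlam]
    exact (hz lam hlam).symm

/-- the type of values in coordinate `i` attained on the layer -/
abbrev ATy (i : I) : Type u :=
  {w : W i // ∃ z : ↥(weakComponent Gs a), InLayer ψ x₀ κ z ∧ z.1 i = w}

/-- the slice of the layer where coordinate `i` is reset to that of `x₀` -/
abbrev BTy (i : I) : Type u :=
  {z : ↥(weakComponent Gs a) // InLayer ψ x₀ κ z ∧ z.1 i = x₀.1 i}

def ADg (i : I) : Digraph (ATy ψ x₀ κ i) := ⟨fun w w' => (Gs i).Adj w.1 w'.1⟩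

def BDg (i : I) : Digraph (BTy ψ x₀ κ i) := ⟨fun s s' => (prodFam Gs).Adj s.1.1 s'.1.1⟩

def mixel (hGconn : ∀ i', (Gs i').Connected) (i : I)
    (ws : ATy ψ x₀ κ i × BTy ψ x₀ κ i) : ↥(weakComponent Gs a) :=
  ⟨Function.update ws.2.1.1 i ws.1.1, update_mem Gs a ws.2.1.2 (hGconn i) _⟩

def toF (hHconnκ : (Hs κ).Connected) (hGconn : ∀ i', (Gs i').Connected) (i : I)
    (w : X κ) : ATy ψ x₀ κ i × BTy ψ x₀ κ i :=
  (⟨(ell ψ x₀ κ hHconnκ w).1 i, ⟨ell ψ x₀ κ hHconnκ w, ell_inLayer ψ x₀ κ hHconnκ w, rfl⟩⟩,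
   ⟨⟨Function.update (ell ψ x₀ κ hHconnκ w).1 i (x₀.1 i),
      update_mem Gs a (ell ψ x₀ κ hHconnκ w).2 (hGconn i) _⟩,
     mix ψ x₀ κ hGconn hHconnκ x₀ (ell ψ x₀ κ hHconnκ w) (fun _ _ => rfl)
       (ell_inLayer ψ x₀ κ hHconnκ w) i _ rfl,
     Function.update_self _ _ _⟩)

lemma mixel_inLayer (hHconnκ : (Hs κ).Connected) (hGconn : ∀ i', (Gs i').Connected) (i : I)
    (ws : ATy ψ x₀ κ i × BTy ψ x₀ κ i) : InLayer ψ x₀ κ (mixel ψ x₀ κ hGconn i ws) := by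
  obtain ⟨zw, hzwI, hzwi⟩ := ws.1.2
  refine mix ψ x₀ κ hGconn hHconnκ zw ws.2.1 hzwI ws.2.2.1 i (mixel ψ x₀ κ hGconn i ws) ?_
  show Function.update ws.2.1.1 i ws.1.1 = Function.update ws.2.1.1 i (zw.1 i)
  rw [hzwi]

lemma prime_dichotomy (hHconnκ : (Hs κ).Connected) (hx₀ : ¬ (prodFam Gs).Adj x₀.1 x₀.1)
    (hGconn : ∀ i', (Gs i').Connected) (hprime : (Hs κ).IsPrime) (i : I) :
    Subsingleton (ATy ψ x₀ κ i) ∨ Subsingleton (BTy ψ x₀ κ i) := by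
  have hy₀ : ¬ (prodFam Hs).Adj (ψ x₀).1 (ψ x₀).1 := fun h => hx₀ (ψ.map_rel_iff.1 h)
  have hleft : ∀ w : X κ,
      (ψ (mixel ψ x₀ κ (hGconn) i (toF ψ x₀ κ hHconnκ hGconn i w))).1 κ = w := by
    intro w
    have h1 : mixel ψ x₀ κ hGconn i (toF ψ x₀ κ hHconnκ hGconn i w) =
        ell ψ x₀ κ hHconnκ w := by
      apply Subtype.ext
      show Function.update
        (Function.update (ell ψ x₀ κ hHconnκ w).1 i (x₀.1 i)) i
          ((ell ψ x₀ κ hHconnκ w).1 i) = (ell ψ x₀ κ hHconnκ w).1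
      rw [Function.update_idem, Function.update_eq_self]
    rw [h1, ell_coord]
  have hright : ∀ ws : ATy ψ x₀ κ i × BTy ψ x₀ κ i,
      toF ψ x₀ κ hHconnκ hGconn i ((ψ (mixel ψ x₀ κ hGconn i ws)).1 κ) = ws := by
    rintro ⟨⟨w, hw⟩, ⟨s, hsI, hsi⟩⟩
    have hIm := mixel_inLayer ψ x₀ κ hHconnκ hGconn i ⟨⟨w, hw⟩, ⟨s, hsI, hsi⟩⟩
    have hm : ell ψ x₀ κ hHconnκ ((ψ (mixel ψ x₀ κ hGconn i ⟨⟨w, hw⟩, ⟨s, hsI, hsi⟩⟩)).1 κ) =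
        mixel ψ x₀ κ hGconn i ⟨⟨w, hw⟩, ⟨s, hsI, hsi⟩⟩ :=
      ell_eq ψ x₀ κ hHconnκ _ hIm
    have hmv : (mixel ψ x₀ κ hGconn i ⟨⟨w, hw⟩, ⟨s, hsI, hsi⟩⟩).1 =
        Function.update s.1 i w := rfl
    refine Prod.ext ?_ ?_
    · apply Subtype.ext
      show (ell ψ x₀ κ hHconnκ ((ψ (mixel ψ x₀ κ hGconn i ⟨⟨w, hw⟩, ⟨s, hsI, hsi⟩⟩)).1 κ)).1 i = w
      rw [hm, hmv, Function.update_self]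
    · apply Subtype.ext
      apply Subtype.ext
      show Function.update
        (ell ψ x₀ κ hHconnκ ((ψ (mixel ψ x₀ κ hGconn i ⟨⟨w, hw⟩, ⟨s, hsI, hsi⟩⟩)).1 κ)).1 i
          (x₀.1 i) = s.1
      rw [hm, hmv, Function.update_idem, ← hsi, Function.update_eq_self]
  have hmaprel : ∀ w w' : X κ,
      ((ADg ψ x₀ κ i).boxProd (BDg ψ x₀ κ i)).Adj
        (toF ψ x₀ κ hHconnκ hGconn i w) (toF ψ x₀ κ hHconnκ hGconn i w') ↔
      (Hs κ).Adj w w' := by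
    intro w w'
    have e1 : (prodFam Hs).Adj (ψ (ell ψ x₀ κ hHconnκ w)).1 (ψ (ell ψ x₀ κ hHconnκ w')).1 ↔
        (prodFam Gs).Adj (ell ψ x₀ κ hHconnκ w).1 (ell ψ x₀ κ hHconnκ w').1 := ψ.map_rel_iff
    rw [ell_spec, ell_spec] at e1
    have key1 : (Hs κ).Adj w w' ↔
        (prodFam Gs).Adj (ell ψ x₀ κ hHconnκ w).1 (ell ψ x₀ κ hHconnκ w').1 :=
      (layer_adj Hs hy₀ κ w w').symm.trans e1
    have key2 := box_adj Gs hx₀ i (ell ψ x₀ κ hHconnκ w).1 (ell ψ x₀ κ hHconnκ w').1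
    constructor
    · rintro (⟨h1, h2⟩ | ⟨h1, h2⟩)
      · apply key1.2; apply key2.2; left
        exact ⟨h1, congrArg (fun t => t.1.1) h2⟩
      · apply key1.2; apply key2.2; right
        exact ⟨congrArg Subtype.val h1, h2⟩
    · intro hh
      rcases key2.1 (key1.1 hh) with ⟨h1, h2⟩ | ⟨h1, h2⟩
      · exact Or.inl ⟨h1, Subtype.ext (Subtype.ext h2)⟩
      · exact Or.inr ⟨Subtype.ext h1, h2⟩
  have hiso : Nonempty ((Hs κ).Iso ((ADg ψ x₀ κ i).boxProd (BDg ψ x₀ κ i))) :=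
    ⟨⟨⟨toF ψ x₀ κ hHconnκ hGconn i, fun ws => (ψ (mixel ψ x₀ κ hGconn i ws)).1 κ,
        hleft, hright⟩, fun {w w'} => hmaprel w w'⟩⟩
  rcases hprime.2.2.2 (ADg ψ x₀ κ i) (BDg ψ x₀ κ i) hiso with ⟨-, hAs⟩ | ⟨-, hBs⟩
  · exact Or.inl hAs
  · exact Or.inr hBs

lemma conc (hx₀ : ¬ (prodFam Gs).Adj x₀.1 x₀.1)
    (hGconn : ∀ i', (Gs i').Connected) (hprime : (Hs κ).IsPrime) :
    ∃ i, ∀ z : ↥(weakComponent Gs a), InLayer ψ x₀ κ z → ∀ j, j ≠ i → z.1 j = x₀.1 j := by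
  have hHconnκ : (Hs κ).Connected := hprime.1
  by_contra hcon
  push_neg at hcon
  have hAsub : ∀ i, Subsingleton (ATy ψ x₀ κ i) := by
    intro i
    rcases prime_dichotomy ψ x₀ κ hHconnκ hx₀ hGconn hprime i with hA | hB
    · exact hA
    · exfalso
      obtain ⟨z, hIz, j, hjne, hzj⟩ := hcon i
      have hmem : Function.update z.1 i (x₀.1 i) ∈ weakComponent Gs a :=
        update_mem Gs a z.2 (hGconn i) _
      have hIr : InLayer ψ x₀ κ (⟨Function.update z.1 i (x₀.1 i), hmem⟩ :
          ↥(weakComponent Gs a)) :=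
        mix ψ x₀ κ hGconn hHconnκ x₀ z (fun _ _ => rfl) hIz i _ rfl
      have heq := hB.elim
        (⟨⟨Function.update z.1 i (x₀.1 i), hmem⟩, hIr, Function.update_self _ _ _⟩ :
          BTy ψ x₀ κ i)
        ⟨x₀, fun _ _ => rfl, rfl⟩
      have hval : Function.update z.1 i (x₀.1 i) = x₀.1 :=
        congrArg (fun t => t.1.1) heq
      have := congrFun hval j
      rw [Function.update_of_ne hjne] at this
      exact hzj this
  have hconst : ∀ z : ↥(weakComponent Gs a), InLayer ψ x₀ κ z → z = x₀ := by
    intro z hz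
    apply Subtype.ext
    funext i
    have h1 : (⟨z.1 i, ⟨z, hz, rfl⟩⟩ : ATy ψ x₀ κ i) =
        ⟨x₀.1 i, ⟨x₀, fun _ _ => rfl, rfl⟩⟩ := (hAsub i).elim _ _
    exact congrArg Subtype.val h1
  obtain ⟨w, w', hne⟩ := hprime.2.1
  apply hne
  have e1 := hconst (ell ψ x₀ κ hHconnκ w) (ell_inLayer ψ x₀ κ hHconnκ w)
  have e2 := hconst (ell ψ x₀ κ hHconnκ w') (ell_inLayer ψ x₀ κ hHconnκ w')
  have c1 := ell_coord ψ x₀ κ hHconnκ w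
  have c2 := ell_coord ψ x₀ κ hHconnκ w'
  rw [e1] at c1
  rw [e2] at c2
  rw [← c1, ← c2]

end Conc

lemma exists_nbr {α : Type u} {G : SimpleGraph α} (hc : G.Connected) (hnt : Nontrivial α)
    (v : α) : ∃ w, G.Adj v w := by
  obtain ⟨w, hw⟩ := exists_ne v
  obtain ⟨p⟩ := hc.preconnected v w
  cases p with
  | nil => exact absurd rfl hw
  | cons h _ => exact ⟨_, h⟩

end DigraphUPF

open Digraph DigraphUPF in
/-- Uniqueness of weak Cartesian prime factorizations: the index sets are in bijection
via a bijection matching isomorphic factors. -/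
theorem weak_prime_factorization_unique {V : Type u} (G : Digraph V)
    (hconn : G.Connected) (hul : ∃ v, ¬ G.Adj v v)
    {I K : Type u} {W : I → Type u} {X : K → Type u}
    (Gs : ∀ i, Digraph (W i)) (Hs : ∀ κ, Digraph (X κ))
    (a : ∀ i, W i) (b : ∀ κ, X κ)
    (hGs : ∀ i, (Gs i).IsPrime) (hHs : ∀ κ, (Hs κ).IsPrime)
    (h₁ : Nonempty (G.Iso (Digraph.weakProd Gs a)))
    (h₂ : Nonempty (G.Iso (Digraph.weakProd Hs b))) :
    ∃ σ : I ≃ K, ∀ i, Nonempty ((Gs i).Iso (Hs (σ i))) := by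
  classical
  obtain ⟨φ₁⟩ := h₁
  obtain ⟨φ₂⟩ := h₂
  obtain ⟨v₀, hv₀⟩ := hul
  set ψ : (weakProd Gs a).Iso (weakProd Hs b) := φ₁.symm.trans φ₂ with hψdef
  set x₀ : ↥(weakComponent Gs a) := φ₁ v₀ with hx₀def
  have hx₀ : ¬ (prodFam Gs).Adj x₀.1 x₀.1 := fun h => hv₀ (φ₁.map_rel_iff.1 h)
  have hy₀ : ¬ (prodFam Hs).Adj (ψ x₀).1 (ψ x₀).1 := fun h => hx₀ (ψ.map_rel_iff.1 h)
  have hGconn : ∀ i, (Gs i).Connected := fun i => (hGs i).1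
  have hHconn : ∀ κ, (Hs κ).Connected := fun κ => (hHs κ).1
  choose τ hτ using fun κ : K => conc ψ x₀ κ hx₀ hGconn (hHs κ)
  choose υ hυ using fun i : I => conc ψ.symm (ψ x₀) i hy₀ hHconn (hGs i)
  -- υ ∘ τ = id
  have hπ : ∀ κ, υ (τ κ) = κ := by
    intro κ
    obtain ⟨w', hadj⟩ := exists_nbr ((hHs κ).1) ((hHs κ).2.1) ((ψ x₀).1 κ)
    set z : ↥(weakComponent Gs a) := ell ψ x₀ κ (hHconn κ) w' with hzdef
    have hIz : InLayer ψ x₀ κ z := ell_inLayer ψ x₀ κ (hHconn κ) w'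
    have hzτ : ∀ j, j ≠ τ κ → z.1 j = x₀.1 j := hτ κ z hIz
    have hIL2 : InLayer ψ.symm (ψ x₀) (τ κ) (ψ z) := by
      intro j hj
      rw [ψ.symm_apply_apply, ψ.symm_apply_apply]
      exact hzτ j hj
    have hcl := hυ (τ κ) (ψ z) hIL2
    by_contra hne
    have : (ψ z).1 κ = (ψ x₀).1 κ := hcl κ (fun h => hne h.symm)
    rw [hzdef, ell_coord] at this
    exact hadj.1 this.symm
  -- τ ∘ υ = id
  have hπ' : ∀ i, τ (υ i) = i := by
    intro i
    obtain ⟨u', hadj⟩ := exists_nbr ((hGs i).1) ((hGs i).2.1) (x₀.1 i)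
    have hadj' : (Gs i).shadow.Adj ((ψ.symm (ψ x₀)).1 i) u' := by
      rwa [ψ.symm_apply_apply]
    set zH : ↥(weakComponent Hs b) := ell ψ.symm (ψ x₀) i (hGconn i) u' with hzHdef
    have hIzH : InLayer ψ.symm (ψ x₀) i zH := ell_inLayer ψ.symm (ψ x₀) i (hGconn i) u'
    have hzHυ : ∀ lam, lam ≠ υ i → zH.1 lam = (ψ x₀).1 lam := hυ i zH hIzH
    have hIL2 : InLayer ψ x₀ (υ i) (ψ.symm zH) := by
      intro lam hlam
      rw [ψ.apply_symm_apply]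
      exact hzHυ lam hlam
    have hcl := hτ (υ i) (ψ.symm zH) hIL2
    by_contra hne
    have h5 : (ψ.symm zH).1 i = x₀.1 i := hcl i (fun h => hne h.symm)
    have h6 : (ψ.symm zH).1 = Function.update (ψ.symm (ψ x₀)).1 i u' :=
      ell_spec ψ.symm (ψ x₀) i (hGconn i) u'
    rw [h6, Function.update_self] at h5
    have h7 : x₀.1 i = (ψ.symm (ψ x₀)).1 i := by rw [ψ.symm_apply_apply]
    rw [h7] at h5
    exact hadj'.1 h5.symm
  refine ⟨⟨υ, τ, hπ', hπ⟩, ?_⟩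
  intro i
  set κ : K := υ i with hκdef
  -- the isomorphism between the factors
  have hmem : ∀ w : W i, Function.update x₀.1 i w ∈ weakComponent Gs a :=
    fun w => update_mem Gs a x₀.2 (hGconn i) w
  set zi : W i → ↥(weakComponent Gs a) := fun w => ⟨Function.update x₀.1 i w, hmem w⟩
    with hzidef
  set f : W i → X κ := fun w => (ψ (zi w)).1 κ with hfdef
  set g : X κ → W i := fun x => (ell ψ x₀ κ (hHconn κ) x).1 i with hgdef
  have KI1 : ∀ w, (ψ (zi w)).1 = Function.update (ψ x₀).1 κ (f w) := by
    intro w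
    have hIL : InLayer ψ.symm (ψ x₀) i (ψ (zi w)) := by
      intro j hj
      rw [ψ.symm_apply_apply, ψ.symm_apply_apply]
      exact Function.update_of_ne hj _ _
    have h1 := hυ i (ψ (zi w)) hIL
    funext lam
    by_cases hlam : lam = κ
    · subst hlam; rw [Function.update_self]
    · rw [Function.update_of_ne hlam]
      exact h1 lam (by rwa [hκdef] at hlam)
  have KI2 : ∀ x, (ell ψ x₀ κ (hHconn κ) x).1 = Function.update x₀.1 i (g x) := by
    intro x
    have h1 := hτ κ (ell ψ x₀ κ (hHconn κ) x) (ell_inLayer ψ x₀ κ (hHconn κ) x)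
    have hτκ : τ κ = i := by rw [hκdef]; exact hπ' i
    funext j
    by_cases hj : j = i
    · subst hj; rw [Function.update_self]
    · rw [Function.update_of_ne hj]
      exact h1 j (fun h => hj (h.trans hτκ))
  have hellzi : ∀ w, ell ψ x₀ κ (hHconn κ) (f w) = zi w := by
    intro w
    apply ψ.injective
    apply Subtype.ext
    rw [ell_spec, KI1]
  have hgf : ∀ w, g (f w) = w := by
    intro w
    rw [hgdef]
    show (ell ψ x₀ κ (hHconn κ) (f w)).1 i = w
    rw [hellzi]
    show Function.update x₀.1 i w i = w
    exact Function.update_self _ _ _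
  have hfg : ∀ x, f (g x) = x := by
    intro x
    have h1 : zi (g x) = ell ψ x₀ κ (hHconn κ) x :=
      Subtype.ext (KI2 x).symm
    rw [hfdef]
    show (ψ (zi (g x))).1 κ = x
    rw [h1, ell_coord]
  have hmaprel : ∀ w w' : W i, (Hs κ).Adj (f w) (f w') ↔ (Gs i).Adj w w' := by
    intro w w'
    have e1 : (prodFam Hs).Adj (ψ (zi w)).1 (ψ (zi w')).1 ↔
        (prodFam Gs).Adj (zi w).1 (zi w').1 := ψ.map_rel_iff
    rw [KI1, KI1] at e1
    have e2 : (prodFam Gs).Adj (zi w).1 (zi w').1 ↔ (Gs i).Adj w w' :=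
      layer_adj Gs hx₀ i w w'
    exact ((layer_adj Hs hy₀ κ (f w) (f w')).symm.trans e1).trans e2
  exact ⟨⟨⟨f, g, hgf, hfg⟩, fun {w w'} => hmaprel w w'⟩⟩
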